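/- Let G be a subgroup of Z_N (with N ≥ 1), where elements of Z_N are identified with their balanced integer representatives in the interval [−⌊(N−1)/2⌋, ⌈(N−1)/2⌉]. Then the number of elements g ∈ G whose balanced representative satisfies |g| ≥ N/4 is exactly |G| + 1 − 2⌈|G|/4⌉. -/

import Mathlib

def bal (N : ℕ) (g : ZMod N) : ℤ :=
  if g.val ≤ N / 2 then (g.val : ℤ) else (g.val : ℤ) - N

/-- The predicate on the value, as a function of a natural number. -/
def balP (N v : ℕ) : Prop :=
  (N : ℝ) / 4 ≤ |((if v ≤ N / 2 then (v : ℤ) else (v : ℤ) - N : ℤ) : ℝ)|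

lemma balP_iff (m d k : ℕ) (hd : 0 < d) (hm : 0 < m) (hk : k < m) :
    balP (m * d) (k * d) ↔ (m ≤ 4 * k ∧ 4 * k ≤ 3 * m) := by
  have hcancel : ∀ a b : ℕ, a * d ≤ b * d ↔ a ≤ b := fun a b =>
    ⟨fun h => Nat.le_of_mul_le_mul_right h hd, fun h => Nat.mul_le_mul_right d h⟩
  unfold balP
  rw [div_le_iff₀ (by norm_num : (0:ℝ) < 4)]
  rw [show (((m*d : ℕ):ℝ) ≤ |((if k*d ≤ m*d/2 then ((k*d:ℕ):ℤ) else ((k*d:ℕ):ℤ) - (m*d:ℕ) : ℤ):ℝ)| * 4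
      ↔ ((m*d : ℕ):ℤ) ≤ (|if k*d ≤ m*d/2 then ((k*d:ℕ):ℤ) else ((k*d:ℕ):ℤ) - (m*d:ℕ)| : ℤ) * 4)
      from by exact_mod_cast Iff.rfl]
  split_ifs with h
  · have h2 : 2 * k ≤ m := by
      refine (hcancel (2*k) m).mp ?_
      rw [Nat.mul_assoc]
      omega
    rw [abs_of_nonneg (by positivity)]
    have key : ((m*d : ℕ):ℤ) ≤ ((k*d:ℕ):ℤ) * 4 ↔ m*d ≤ (k*d)*4 := by exact_mod_cast Iff.rfl
    rw [key]
    have key2 : m*d ≤ (k*d)*4 ↔ m ≤ 4*k := by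
      rw [show (k*d)*4 = (4*k)*d from by ring]
      exact hcancel m (4*k)
    rw [key2]
    constructor
    · exact fun hh => ⟨hh, by omega⟩
    · exact fun hh => hh.1
  · have h2 : m < 2 * k := by
      by_contra hc
      push_neg at hc
      refine h ?_
      have : (2*k)*d ≤ m*d := (hcancel (2*k) m).mpr hc
      rw [Nat.mul_assoc] at this
      omega
    have hkd : k*d ≤ m*d := (hcancel k m).mpr hk.le
    rw [abs_of_nonpos (sub_nonpos.mpr (by exact_mod_cast hkd))]
    have key : ((m*d : ℕ):ℤ) ≤ -(((k*d:ℕ):ℤ) - ((m*d:ℕ):ℤ)) * 4 ↔ m*d + (k*d)*4 ≤ (m*d)*4 := by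
      constructor
      · intro hh; omega
      · intro hh; omega
    rw [key]
    have key2 : m*d + (k*d)*4 ≤ (m*d)*4 ↔ 4*k ≤ 3*m := by
      rw [show m*d + (k*d)*4 = (m + 4*k)*d from by ring, show (m*d)*4 = (4*m)*d from by ring]
      rw [hcancel (m + 4*k) (4*m)]
      omega
    rw [key2]
    constructor
    · exact fun hh => ⟨by omega, hh⟩
    · exact fun hh => hh.2

lemma card_main (N m d : ℕ) [NeZero N] (hd : 0 < d) (hN : N = m * d)
    (p : ℕ → Prop) [DecidablePred p] :
    (Finset.univ.filter (fun g : ZMod N => d ∣ g.val ∧ p g.val)).card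
      = ((Finset.range m).filter (fun k => p (k * d))).card := by
  refine Finset.card_nbij' (fun g => g.val / d) (fun k => ((k * d : ℕ) : ZMod N)) ?_ ?_ ?_ ?_
  · intro g hg
    rw [Finset.mem_coe, Finset.mem_filter] at hg
    obtain ⟨-, hdvd, hp⟩ := hg
    have hlt : g.val < N := ZMod.val_lt g
    rw [Finset.mem_coe, Finset.mem_filter, Finset.mem_range]
    refine ⟨?_, ?_⟩
    · have hlt' : g.val < d * m := by rw [Nat.mul_comm]; omega
      exact Nat.div_lt_of_lt_mul hlt'
    · rwa [Nat.div_mul_cancel hdvd]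
  · intro k hk
    rw [Finset.mem_coe, Finset.mem_filter, Finset.mem_range] at hk
    obtain ⟨hk, hp⟩ := hk
    have hlt : k * d < N := by rw [hN]; exact Nat.mul_lt_mul_of_lt_of_le hk le_rfl hd
    rw [Finset.mem_coe, Finset.mem_filter, ZMod.val_natCast_of_lt hlt]
    exact ⟨Finset.mem_univ _, ⟨k, Nat.mul_comm k d⟩, hp⟩
  · intro g hg
    rw [Finset.mem_coe, Finset.mem_filter] at hg
    simp only
    rw [Nat.div_mul_cancel hg.2.1]
    exact ZMod.natCast_rightInverse g
  · intro k hk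
    rw [Finset.mem_coe, Finset.mem_filter, Finset.mem_range] at hk
    have hlt : k * d < N := by rw [hN]; exact Nat.mul_lt_mul_of_lt_of_le hk.1 le_rfl hd
    simp only
    rw [ZMod.val_natCast_of_lt hlt]
    exact Nat.mul_div_cancel k hd

lemma mem_iff (N : ℕ) [NeZero N] (G : AddSubgroup (ZMod N)) (m d : ℕ)
    (hm : m = Nat.card G) (hN : N = m * d) :
    ∀ x : ZMod N, x ∈ G ↔ d ∣ x.val := by
  classical
  have hNpos : 0 < N := Nat.pos_of_ne_zero (NeZero.ne N)
  have hmpos : 0 < m := by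
    rw [hm]; exact Nat.card_pos
  have hd : 0 < d := Nat.pos_of_ne_zero (fun h => by
    rw [h, Nat.mul_zero] at hN; omega)
  have forward : ∀ x : ZMod N, x ∈ G → d ∣ x.val := by
    intro x hx
    have h1 : m • (⟨x, hx⟩ : G) = 0 := by rw [hm]; exact card_nsmul_eq_zero'
    have h2 : m • x = 0 := by
      have := congrArg (Subtype.val) h1
      simpa using this
    have h3 : ((m * x.val : ℕ) : ZMod N) = 0 := by
      push_cast
      rw [ZMod.natCast_rightInverse x]
      rw [← nsmul_eq_mul]
      exact h2
    have h4 : N ∣ m * x.val := (ZMod.natCast_eq_zero_iff _ _).mp h3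
    have h4' : m * d ∣ m * x.val := by rw [← hN]; exact h4
    exact (Nat.mul_dvd_mul_iff_left hmpos).mp h4'
  -- now the cardinality argument
  set GF : Finset (ZMod N) := Finset.univ.filter (· ∈ G) with hGF
  set T : Finset (ZMod N) := Finset.univ.filter (fun x => d ∣ x.val) with hT
  have hsub : GF ⊆ T := by
    intro x hx
    rw [hGF, Finset.mem_filter] at hx
    rw [hT, Finset.mem_filter]
    exact ⟨Finset.mem_univ _, forward x hx.2⟩
  have hGFcard : GF.card = m := by
    rw [hm, Nat.card_eq_fintype_card, Fintype.card_subtype]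
  have hTcard : T.card = m := by
    have := card_main N m d hd hN (fun _ => True)
    simp only [and_true, Finset.filter_true_of_mem (fun _ _ => trivial), Finset.card_range] at this
    rw [hT]
    convert this using 2
  have heq : GF = T := Finset.eq_of_subset_of_card_le hsub (by omega)
  intro x
  have hx1 : x ∈ G ↔ x ∈ GF := by simp [hGF]
  have hx2 : x ∈ T ↔ d ∣ x.val := by simp [hT]
  rw [hx1, heq, hx2]

theorem stmt6 (N : ℕ) [NeZero N] (G : AddSubgroup (ZMod N)) :
    (Nat.card {g : ZMod N // g ∈ G ∧ (N : ℝ) / 4 ≤ (|bal N g| : ℝ)} : ℤ) =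
      (Nat.card G : ℤ) + 1 - 2 * ⌈(Nat.card G : ℚ) / 4⌉ := by
  classical
  set m := Nat.card G with hm
  have hNpos : 0 < N := Nat.pos_of_ne_zero (NeZero.ne N)
  have hmpos : 0 < m := Nat.card_pos
  have hmdvd : m ∣ N := by
    have h1 : Nat.card G ∣ Nat.card (ZMod N) := AddSubgroup.card_addSubgroup_dvd_card G
    rwa [Nat.card_zmod] at h1
  set d := N / m with hd'
  have hN : N = m * d := (Nat.mul_div_cancel' hmdvd).symm
  have hdpos : 0 < d := Nat.pos_of_ne_zero (fun h => by
    rw [h, Nat.mul_zero] at hN; omega)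
  have hmem := mem_iff N G m d hm hN
  -- convert Nat.card of subtype to a filter card
  have hcard1 : Nat.card {g : ZMod N // g ∈ G ∧ (N : ℝ) / 4 ≤ (|bal N g| : ℝ)}
      = (Finset.univ.filter (fun g : ZMod N => d ∣ g.val ∧ balP N g.val)).card := by
    rw [Nat.card_eq_fintype_card, Fintype.card_subtype]
    congr 1
    apply Finset.filter_congr
    intro g _
    rw [hmem g]
    unfold balP bal
    rfl
  set c := (m + 3) / 4 with hc
  have hc2 : 2 * c ≤ m + 1 := by omega
  have hcount : (Finset.univ.filter (fun g : ZMod N => d ∣ g.val ∧ balP N g.val)).card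
      = m + 1 - 2 * c := by
    rw [card_main N m d hdpos hN (fun v => balP N v)]
    have hfc : (Finset.range m).filter (fun k => balP N (k * d))
        = Finset.Icc c (3 * m / 4) := by
      ext k
      rw [Finset.mem_filter, Finset.mem_range, Finset.mem_Icc]
      constructor
      · rintro ⟨hk, hp⟩
        rw [hN] at hp
        have := (balP_iff m d k hdpos hmpos hk).mp hp
        omega
      · rintro ⟨h1, h2⟩
        have hk : k < m := by omega
        refine ⟨hk, ?_⟩
        rw [hN]
        exact (balP_iff m d k hdpos hmpos hk).mpr (by omega)
    rw [hfc, Nat.card_Icc]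
    omega
  have hceil : ⌈(m : ℚ) / 4⌉ = (c : ℤ) := by
    rw [Int.ceil_eq_iff]
    constructor
    · rw [lt_div_iff₀ (by norm_num : (0:ℚ) < 4)]
      have h1 : 4 * c < m + 4 := by omega
      have h2 : (4 * c : ℚ) < (m : ℚ) + 4 := by exact_mod_cast h1
      push_cast
      linarith
    · rw [div_le_iff₀ (by norm_num : (0:ℚ) < 4)]
      have h1 : m ≤ 4 * c := by omega
      have h2 : (m : ℚ) ≤ 4 * c := by exact_mod_cast h1
      push_cast
      linarith
  rw [hcard1, hcount, hceil]
  omega
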